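/- Let T be a finite tree with a designated root, with edge parameters r_e, x_e ∈ ℝ satisfying r_e^2 + x_e^2 > 0 for every edge e, and define g_e = r_e/(r_e^2 + x_e^2) and β_e = x_e/(r_e^2 + x_e^2). Let K_r and K_x be the path-sum matrices with weights r_e and x_e, and let H_g and H_β be the reduced weighted graph Laplacians with weights g_e and β_e respectively (H_g(a,a) = Σ_{c : {a,c} edge} g_{ac}, H_g(a,b) = -g_{ab} for edges {a,b}, zero otherwise, indexed by non-root vertices; similarly for H_β). Suppose vectors p, q, ε, θ indexed by the non-root vertices satisfy the LC-PF matrix equations p = H_g ε + H_β θ and q = H_β ε - H_g θ. Then ε = K_r p + K_x q and θ = K_x p - K_r q. -/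

import Mathlib

open Classical Matrix

/-- A finite tree with a designated root vertex (the slack bus). -/
structure GridTree (V : Type*) [Fintype V] [DecidableEq V] where
  graph : SimpleGraph V
  root : V
  isTree : graph.IsTree

namespace GridTree

variable {V : Type*} [Fintype V] [DecidableEq V] (T : GridTree V)

/-- The unique path (as a walk) from a vertex to the root. -/
noncomputable def pathToRoot (a : V) : T.graph.Walk a T.root :=
  (T.isTree.existsUnique_path a T.root).choose

/-- `E_a`: the set of edges on the unique path from `a` to the root. -/
noncomputable def pathEdges (a : V) : Finset (Sym2 V) :=
  (T.pathToRoot a).edges.toFinset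

/-- `c` is a descendant of `a`: `a` lies on the unique path from `c` to the root
(in particular every vertex is a descendant of itself). -/
def Descendant (c a : V) : Prop := a ∈ (T.pathToRoot c).support

/-- `b` is the parent of `a`: the edge `{a, b}` lies on the path from `a` to the root
(equivalently, `b` is the unique neighbor of `a` on that path). -/
noncomputable def IsParent (a b : V) : Prop := s(a, b) ∈ T.pathEdges a

/-- The path-sum matrix `K_w`, indexed by the non-root vertices:
`K_w(a,b) = ∑_{e ∈ E_a ∩ E_b} w_e`. -/
noncomputable def pathMatrix (w : Sym2 V → ℝ) :
    Matrix {v : V // v ≠ T.root} {v : V // v ≠ T.root} ℝ :=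
  fun a b => ∑ e ∈ T.pathEdges a.1 ∩ T.pathEdges b.1, w e

/-- The reduced weighted graph Laplacian with edge weights `w`, indexed by the
non-root vertices (the row and column of the root are deleted). -/
noncomputable def lap (w : Sym2 V → ℝ) :
    Matrix {v : V // v ≠ T.root} {v : V // v ≠ T.root} ℝ :=
  fun a b =>
    if a = b then ∑ c ∈ Finset.univ.filter (fun c => T.graph.Adj a.1 c), w s(a.1, c)
    else if T.graph.Adj a.1 b.1 then - w s(a.1, b.1) else 0

end GridTree


namespace GridTree

open SimpleGraph Walk

variable {V : Type*} [Fintype V] [DecidableEq V] (T : GridTree V)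

lemma pathToRoot_isPath (a : V) : (T.pathToRoot a).IsPath :=
  (T.isTree.existsUnique_path a T.root).choose_spec.1

lemma path_unique {a : V} (p : T.graph.Walk a T.root) (hp : p.IsPath) :
    p = T.pathToRoot a :=
  (T.isTree.existsUnique_path a T.root).choose_spec.2 p hp

lemma pathToRoot_root : T.pathToRoot T.root = SimpleGraph.Walk.nil :=
  (T.path_unique SimpleGraph.Walk.nil SimpleGraph.Walk.IsPath.nil).symm

lemma pathEdges_root : T.pathEdges T.root = ∅ := by
  simp [pathEdges, pathToRoot_root]

/-- `c` is the parent of `b`. -/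
def Pc (b c : V) : Prop :=
  ∃ h : T.graph.Adj b c, T.pathToRoot b = SimpleGraph.Walk.cons h (T.pathToRoot c)

lemma Pc.length {b c : V} (h : T.Pc b c) :
    (T.pathToRoot b).length = (T.pathToRoot c).length + 1 := by
  obtain ⟨h, e⟩ := h
  rw [e, SimpleGraph.Walk.length_cons]

lemma Pc.adj {b c : V} (h : T.Pc b c) : T.graph.Adj b c := h.choose

lemma Pc.not_symm {b c : V} (h : T.Pc b c) : ¬ T.Pc c b := fun h' => by
  have := h.length; have := h'.length; omega

lemma Pc.mem_pathEdges {b c : V} (h : T.Pc b c) : s(b, c) ∈ T.pathEdges b := by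
  obtain ⟨h, e⟩ := h
  rw [pathEdges, e, SimpleGraph.Walk.edges_cons]
  simp

/-- Main structural lemma: any vertex on a path to the root has its own
path-to-root as a suffix. -/
lemma suffix_of_mem_support {c : V} :
    ∀ {v w : V} (p : T.graph.Walk v w) (_ : p.IsPath) (hw : w = T.root)
      (_ : c ∈ p.support),
      ∃ q : T.graph.Walk v c, p = q.append ((T.pathToRoot c).copy rfl hw.symm) ∧
        (T.pathToRoot c).support ⊆ p.support ∧
        (T.pathToRoot c).edges ⊆ p.edges ∧
        (T.pathToRoot c).length ≤ p.length := by
  intro v w p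
  induction p with
  | nil =>
    intro _ hw hc
    simp only [SimpleGraph.Walk.support_nil, List.mem_singleton] at hc
    subst hc
    subst hw
    refine ⟨SimpleGraph.Walk.nil, ?_, ?_, ?_, ?_⟩ <;>
      simp [pathToRoot_root]
  | @cons u v' w' h q ih =>
    intro hp hw hc
    rw [SimpleGraph.Walk.support_cons, List.mem_cons] at hc
    rcases hc with rfl | hc
    · subst hw
      have hpath : T.pathToRoot c = SimpleGraph.Walk.cons h q :=
        (T.path_unique _ hp).symm
      refine ⟨SimpleGraph.Walk.nil, ?_, ?_, ?_, ?_⟩ <;>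
        simp [hpath]
    · obtain ⟨q', hq', hs, he, hl⟩ := ih hp.of_cons hw hc
      refine ⟨SimpleGraph.Walk.cons h q', ?_, ?_, ?_, ?_⟩
      · rw [SimpleGraph.Walk.cons_append, ← hq']
      · rw [SimpleGraph.Walk.support_cons]
        exact fun _ hx => List.mem_cons_of_mem _ (hs hx)
      · rw [SimpleGraph.Walk.edges_cons]
        exact fun _ hx => List.mem_cons_of_mem _ (he hx)
      · rw [SimpleGraph.Walk.length_cons]
        omega

lemma subsets_of_mem_support {a c : V} (hc : c ∈ (T.pathToRoot a).support) :
    (T.pathToRoot c).support ⊆ (T.pathToRoot a).support ∧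
    (T.pathToRoot c).edges ⊆ (T.pathToRoot a).edges ∧
    (T.pathToRoot c).length ≤ (T.pathToRoot a).length :=
  (T.suffix_of_mem_support _ (T.pathToRoot_isPath a) rfl hc).choose_spec.2

lemma pathEdges_subset {a c : V} (hc : c ∈ (T.pathToRoot a).support) :
    T.pathEdges c ⊆ T.pathEdges a := by
  intro e he
  rw [pathEdges, List.mem_toFinset] at he ⊢
  exact (T.subsets_of_mem_support hc).2.1 he

/-- Any two vertices on a common path to the root are comparable. -/
lemma tri {c c' : V} :
    ∀ {v w : V} (p : T.graph.Walk v w), p.IsPath → w = T.root →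
      c ∈ p.support → c' ∈ p.support →
      c' ∈ (T.pathToRoot c).support ∨ c ∈ (T.pathToRoot c').support := by
  intro v w p
  induction p with
  | nil =>
    intro _ hw hc hc'
    simp only [SimpleGraph.Walk.support_nil, List.mem_singleton] at hc hc'
    subst hc; subst hc'
    left; exact SimpleGraph.Walk.start_mem_support _
  | @cons u v' w' h q ih =>
    intro hp hw hc hc'
    rw [SimpleGraph.Walk.support_cons, List.mem_cons] at hc hc'
    rcases hc with rfl | hc
    · subst hw
      have hpath : T.pathToRoot c = SimpleGraph.Walk.cons h q :=
        (T.path_unique _ hp).symm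
      left
      rw [hpath, SimpleGraph.Walk.support_cons]
      rcases hc' with rfl | hc'
      · exact List.mem_cons_self
      · exact List.mem_cons_of_mem _ hc'
    · rcases hc' with rfl | hc'
      · subst hw
        have hpath : T.pathToRoot c' = SimpleGraph.Walk.cons h q :=
          (T.path_unique _ hp).symm
        right
        rw [hpath, SimpleGraph.Walk.support_cons]
        exact List.mem_cons_of_mem _ hc
      · exact ih hp.of_cons hw hc hc'

/-- Existence of the on-path child of `b` when `b` is on the path from `a`
and differs from `a`. -/
lemma exists_child {b : V} :
    ∀ {v w : V} (p : T.graph.Walk v w), p.IsPath → w = T.root →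
      b ∈ p.support → b ≠ v →
      ∃ c, c ∈ p.support ∧ T.Pc c b := by
  intro v w p
  induction p with
  | nil =>
    intro _ _ hb hne
    simp only [SimpleGraph.Walk.support_nil, List.mem_singleton] at hb
    exact absurd hb hne
  | @cons u v' w' h q ih =>
    intro hp hw hb hne
    rw [SimpleGraph.Walk.support_cons, List.mem_cons] at hb
    rcases hb with rfl | hb
    · exact absurd rfl hne
    · by_cases hbv : b = v'
      · subst hbv
        subst hw
        have hq : q = T.pathToRoot b := T.path_unique q hp.of_cons
        refine ⟨u, SimpleGraph.Walk.start_mem_support _, h, ?_⟩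
        rw [← hq]
        exact (T.path_unique _ hp).symm
      · obtain ⟨c, hc, hPc⟩ := ih hp.of_cons hw hb hbv
        exact ⟨c, by rw [SimpleGraph.Walk.support_cons]; exact List.mem_cons_of_mem _ hc, hPc⟩

lemma parent_exists {b : V} (hb : b ≠ T.root) : ∃ c, T.Pc b c := by
  obtain ⟨c, h, p', hp'⟩ := SimpleGraph.Walk.exists_eq_cons_of_ne hb (T.pathToRoot b)
  have hp'path : p'.IsPath := by
    have := T.pathToRoot_isPath b
    rw [hp'] at this
    exact this.of_cons
  exact ⟨c, h, by rw [hp', T.path_unique p' hp'path]⟩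

lemma Pc_of_mem_pathEdges {b c : V} (hm : s(b, c) ∈ T.pathEdges b) : T.Pc b c := by
  have hb : b ≠ T.root := by
    rintro rfl
    rw [T.pathEdges_root] at hm
    exact absurd hm (Finset.notMem_empty _)
  obtain ⟨c₀, h₀, e₀⟩ := T.parent_exists hb
  rw [pathEdges, e₀, SimpleGraph.Walk.edges_cons, List.toFinset_cons, Finset.mem_insert,
    List.mem_toFinset] at hm
  rcases hm with hm | hm
  · obtain rfl := Sym2.congr_right.mp hm
    exact ⟨h₀, e₀⟩
  · exfalso
    have hbsupp : b ∈ (T.pathToRoot c₀).support :=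
      SimpleGraph.Walk.fst_mem_support_of_mem_edges _ hm
    have := T.pathToRoot_isPath b
    rw [e₀, SimpleGraph.Walk.cons_isPath_iff] at this
    exact this.2 hbsupp

lemma Pc_unique {b c c' : V} (h : T.Pc b c) (h' : T.Pc b c') : c = c' := by
  obtain ⟨h1, e1⟩ := h
  obtain ⟨h2, e2⟩ := h'
  have hs : b :: (T.pathToRoot c).support = b :: (T.pathToRoot c').support := by
    rw [← SimpleGraph.Walk.support_cons h1, ← SimpleGraph.Walk.support_cons h2, ← e1, ← e2]
  have hs' : (T.pathToRoot c).support = (T.pathToRoot c').support := by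
    simpa using hs
  have h3 := hs' ▸ (T.pathToRoot c).support_eq_cons
  rw [(T.pathToRoot c').support_eq_cons] at h3
  exact (List.cons_eq_cons.mp h3).1.symm

lemma parent_or_child {b c : V} (h : T.graph.Adj b c) : T.Pc b c ∨ T.Pc c b := by
  by_cases hb : b ∈ (T.pathToRoot c).support
  · right
    obtain ⟨q, hq, -⟩ := T.suffix_of_mem_support (T.pathToRoot c) (T.pathToRoot_isPath c) rfl hb
    have hqpath : q.IsPath := by
      have := T.pathToRoot_isPath c
      rw [hq] at this
      exact SimpleGraph.Walk.IsPath.of_append_left this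
    have hsingle : (SimpleGraph.Walk.cons h.symm SimpleGraph.Walk.nil : T.graph.Walk c b).IsPath := by
      simp [SimpleGraph.Walk.cons_isPath_iff, h.ne']
    have hq2 : q = SimpleGraph.Walk.cons h.symm SimpleGraph.Walk.nil :=
      (T.isTree.existsUnique_path c b).unique hqpath hsingle
    refine ⟨h.symm, ?_⟩
    rw [hq, hq2]
    simp [SimpleGraph.Walk.cons_append]
  · left
    refine ⟨h, ?_⟩
    exact (T.path_unique _ ((T.pathToRoot_isPath c).cons hb)).symm

lemma Pc.mem_pathEdges_iff {a b c : V} (h : T.Pc b c) :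
    s(b, c) ∈ T.pathEdges a ↔ b ∈ (T.pathToRoot a).support := by
  constructor
  · intro hm
    rw [pathEdges, List.mem_toFinset] at hm
    exact SimpleGraph.Walk.fst_mem_support_of_mem_edges _ hm
  · intro hb
    exact T.pathEdges_subset hb h.mem_pathEdges

/-- Summing over an intersection with an `insert`. -/
lemma sum_inter_insert {α : Type*} [DecidableEq α] (w : α → ℝ) {s t : Finset α} {e : α}
    (he : e ∉ t) :
    (∑ f ∈ s ∩ insert e t, w f) = (if e ∈ s then w e else 0) + ∑ f ∈ s ∩ t, w f := by
  by_cases hes : e ∈ s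
  · rw [Finset.inter_comm, Finset.insert_inter_of_mem hes, Finset.inter_comm, if_pos hes,
      Finset.sum_insert (fun hm => he (Finset.mem_inter.mp hm).2)]
  · rw [Finset.inter_comm, Finset.insert_inter_of_notMem hes, Finset.inter_comm, if_neg hes,
      zero_add]

lemma pathEdges_of_Pc {b c : V} (hPc : T.Pc b c) :
    T.pathEdges b = insert s(b, c) (T.pathEdges c) := by
  obtain ⟨h', e'⟩ := hPc
  rw [pathEdges, e', SimpleGraph.Walk.edges_cons, List.toFinset_cons]
  rfl

/-- The per-neighbor telescoping step. -/
lemma step (w : Sym2 V → ℝ) {a b c : V} (h : T.graph.Adj b c) :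
    (∑ e ∈ T.pathEdges a ∩ T.pathEdges b, w e)
      - (∑ e ∈ T.pathEdges a ∩ T.pathEdges c, w e) =
    (if s(b, c) ∈ T.pathEdges b then (1:ℝ) else -1) * w s(b, c) *
      (if s(b, c) ∈ T.pathEdges a then (1:ℝ) else 0) := by
  rcases T.parent_or_child h with hPc | hPc
  · have hsb : s(b, c) ∈ T.pathEdges b := hPc.mem_pathEdges
    have hnot : s(b, c) ∉ T.pathEdges c := by
      intro hm
      rw [Sym2.eq_swap] at hm
      exact Pc.not_symm T hPc (T.Pc_of_mem_pathEdges hm)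
    rw [if_pos hsb, T.pathEdges_of_Pc hPc, sum_inter_insert (α := Sym2 V) w hnot]
    by_cases hsa : s(b, c) ∈ T.pathEdges a
    · rw [if_pos hsa, if_pos hsa]; ring
    · rw [if_neg hsa, if_neg hsa]; ring
  · have hsc : s(c, b) ∈ T.pathEdges c := hPc.mem_pathEdges
    have hnotb : s(b, c) ∉ T.pathEdges b := by
      intro hm
      exact Pc.not_symm T hPc (T.Pc_of_mem_pathEdges hm)
    have hEc : T.pathEdges c = insert s(b, c) (T.pathEdges b) := by
      rw [T.pathEdges_of_Pc hPc, Sym2.eq_swap]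
    rw [if_neg hnotb, hEc, sum_inter_insert (α := Sym2 V) w hnotb]
    by_cases hsa : s(b, c) ∈ T.pathEdges a
    · rw [if_pos hsa, if_pos hsa]; ring
    · rw [if_neg hsa, if_neg hsa]; ring

/-- Entry formula for `K_w * H_u`. -/
lemma mul_lap_apply (w u : Sym2 V → ℝ) (a b : {v : V // v ≠ T.root}) :
    (T.pathMatrix w * T.lap u) a b =
      ∑ c ∈ Finset.univ.filter (fun c => T.graph.Adj b.1 c),
        (if s(b.1, c) ∈ T.pathEdges b.1 then (1:ℝ) else -1) *
          (w s(b.1, c) * u s(b.1, c)) *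
          (if s(b.1, c) ∈ T.pathEdges a.1 then (1:ℝ) else 0) := by
  classical
  set k : V → ℝ := fun c => ∑ e ∈ T.pathEdges a.1 ∩ T.pathEdges c, w e with hk
  have hterm : ∀ c : {v : V // v ≠ T.root},
      T.pathMatrix w a c * T.lap u c b =
        (if c = b then
            k b.1 * ∑ d ∈ Finset.univ.filter (fun d => T.graph.Adj b.1 d), u s(b.1, d)
          else 0)
        + (if T.graph.Adj b.1 c.1 then -(k c.1 * u s(b.1, c.1)) else 0) := by
    intro c
    by_cases hc : c = b
    · subst hc
      rw [if_pos rfl, if_neg (T.graph.irrefl), add_zero, lap, if_pos rfl]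
      rfl
    · rw [if_neg hc, zero_add, lap, if_neg hc]
      have hcb : c.1 ≠ b.1 := fun hh => hc (Subtype.ext hh)
      by_cases hadj : T.graph.Adj b.1 c.1
      · rw [if_pos (hadj.symm), if_pos hadj, Sym2.eq_swap]
        show k c.1 * (- u s(b.1, c.1)) = -(k c.1 * u s(b.1, c.1))
        ring
      · rw [if_neg (fun hh => hadj hh.symm), if_neg hadj, mul_zero]
  rw [Matrix.mul_apply, Finset.sum_congr rfl (fun c _ => hterm c), Finset.sum_add_distrib,
    Finset.sum_ite_eq' Finset.univ b]
  rw [if_pos (Finset.mem_univ b)]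
  have hsub : (∑ c : {v : V // v ≠ T.root},
        (if T.graph.Adj b.1 c.1 then -(k c.1 * u s(b.1, c.1)) else 0))
      = ∑ c ∈ Finset.univ.filter (fun c => c ≠ T.root),
          (if T.graph.Adj b.1 c then -(k c * u s(b.1, c)) else 0) := by
    exact (Finset.sum_subtype _
      (fun y => (by simp : y ∈ Finset.univ.filter (fun c => c ≠ T.root) ↔ y ≠ T.root))
      (fun c => if T.graph.Adj b.1 c then -(k c * u s(b.1, c)) else 0)).symm
  have hext : (∑ c ∈ Finset.univ.filter (fun c => c ≠ T.root),
        (if T.graph.Adj b.1 c then -(k c * u s(b.1, c)) else 0))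
      = ∑ c ∈ Finset.univ,
          (if T.graph.Adj b.1 c then -(k c * u s(b.1, c)) else 0) := by
    apply Finset.sum_subset (Finset.filter_subset _ _)
    intro c _ hcn
    have hcr : c = T.root := by
      by_contra hne
      exact hcn (Finset.mem_filter.mpr ⟨Finset.mem_univ _, hne⟩)
    subst hcr
    have : k T.root = 0 := by
      rw [hk]
      simp [T.pathEdges_root]
    rw [this]
    simp
  rw [hsub, hext, ← Finset.sum_filter]
  rw [Finset.mul_sum, ← Finset.sum_add_distrib]
  apply Finset.sum_congr rfl
  intro c hc
  have hadj : T.graph.Adj b.1 c := (Finset.mem_filter.mp hc).2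
  have := T.step w (a := a.1) hadj
  show k b.1 * u s(b.1, c) + -(k c * u s(b.1, c)) = _
  calc k b.1 * u s(b.1, c) + -(k c * u s(b.1, c))
      = (k b.1 - k c) * u s(b.1, c) := by ring
    _ = ((if s(b.1, c) ∈ T.pathEdges b.1 then (1:ℝ) else -1) * w s(b.1, c) *
          (if s(b.1, c) ∈ T.pathEdges a.1 then (1:ℝ) else 0)) * u s(b.1, c) := by
        rw [← this]
    _ = _ := by ring

/-- The signed counting identity: the inverse property of the path matrix. -/
lemma count_sum (a b : {v : V // v ≠ T.root}) :
    (∑ c ∈ Finset.univ.filter (fun c => T.graph.Adj b.1 c),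
      (if s(b.1, c) ∈ T.pathEdges b.1 then (1:ℝ) else -1) *
        (if s(b.1, c) ∈ T.pathEdges a.1 then (1:ℝ) else 0))
      = if a = b then 1 else 0 := by
  classical
  have hsplit : ∀ c ∈ Finset.univ.filter (fun c => T.graph.Adj b.1 c),
      (if s(b.1, c) ∈ T.pathEdges b.1 then (1:ℝ) else -1) *
        (if s(b.1, c) ∈ T.pathEdges a.1 then (1:ℝ) else 0)
      = (if s(b.1, c) ∈ T.pathEdges b.1 ∧ s(b.1, c) ∈ T.pathEdges a.1 then (1:ℝ) else 0)
        - (if s(b.1, c) ∈ T.pathEdges c ∧ s(b.1, c) ∈ T.pathEdges a.1 then (1:ℝ) else 0) := by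
    intro c hc
    have hadj : T.graph.Adj b.1 c := (Finset.mem_filter.mp hc).2
    rcases T.parent_or_child hadj with hPc | hPc
    · have hsb : s(b.1, c) ∈ T.pathEdges b.1 := hPc.mem_pathEdges
      have hnsc : s(b.1, c) ∉ T.pathEdges c := by
        intro hm
        rw [Sym2.eq_swap] at hm
        exact Pc.not_symm T hPc (T.Pc_of_mem_pathEdges hm)
      rw [if_pos hsb]
      by_cases hsa : s(b.1, c) ∈ T.pathEdges a.1
      · rw [if_pos hsa, if_pos ⟨hsb, hsa⟩, if_neg (fun hh => hnsc hh.1)]; norm_num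
      · rw [if_neg hsa, if_neg (fun hh => hsa hh.2), if_neg (fun hh => hsa hh.2)]; norm_num
    · have hsc : s(b.1, c) ∈ T.pathEdges c := by
        rw [Sym2.eq_swap]; exact hPc.mem_pathEdges
      have hnsb : s(b.1, c) ∉ T.pathEdges b.1 := by
        intro hm
        exact Pc.not_symm T hPc (T.Pc_of_mem_pathEdges hm)
      rw [if_neg hnsb]
      by_cases hsa : s(b.1, c) ∈ T.pathEdges a.1
      · rw [if_pos hsa, if_neg (fun hh => hnsb hh.1), if_pos ⟨hsc, hsa⟩]; norm_num
      · rw [if_neg hsa, if_neg (fun hh => hsa hh.2), if_neg (fun hh => hsa hh.2)]; norm_num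
  rw [Finset.sum_congr rfl hsplit, Finset.sum_sub_distrib]
  have hS1 : (∑ c ∈ Finset.univ.filter (fun c => T.graph.Adj b.1 c),
      (if s(b.1, c) ∈ T.pathEdges b.1 ∧ s(b.1, c) ∈ T.pathEdges a.1 then (1:ℝ) else 0))
      = if b.1 ∈ (T.pathToRoot a.1).support then 1 else 0 := by
    obtain ⟨c₀, hc₀⟩ := T.parent_exists b.2
    rw [Finset.sum_filter]
    have hkey : ∀ c ∈ Finset.univ,
        (if T.graph.Adj b.1 c then
          (if s(b.1, c) ∈ T.pathEdges b.1 ∧ s(b.1, c) ∈ T.pathEdges a.1 then (1:ℝ) else 0)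
         else 0)
        = if c = c₀ then (if b.1 ∈ (T.pathToRoot a.1).support then (1:ℝ) else 0) else 0 := by
      intro c _
      by_cases hcc : c = c₀
      · subst hcc
        rw [if_pos rfl, if_pos hc₀.adj]
        exact if_congr ⟨fun hh => (hc₀.mem_pathEdges_iff (a := a.1)).mp hh.2,
          fun hh => ⟨hc₀.mem_pathEdges, (hc₀.mem_pathEdges_iff (a := a.1)).mpr hh⟩⟩ rfl rfl
      · rw [if_neg hcc]
        by_cases hadj : T.graph.Adj b.1 c
        · rw [if_pos hadj]
          exact if_neg (fun hh => hcc (T.Pc_unique (T.Pc_of_mem_pathEdges hh.1) hc₀))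
        · rw [if_neg hadj]
    rw [Finset.sum_congr rfl hkey, Finset.sum_ite_eq' Finset.univ c₀, if_pos (Finset.mem_univ c₀)]
  have hS2 : (∑ c ∈ Finset.univ.filter (fun c => T.graph.Adj b.1 c),
      (if s(b.1, c) ∈ T.pathEdges c ∧ s(b.1, c) ∈ T.pathEdges a.1 then (1:ℝ) else 0))
      = if b.1 ∈ (T.pathToRoot a.1).support ∧ b.1 ≠ a.1 then 1 else 0 := by
    by_cases hQ : b.1 ∈ (T.pathToRoot a.1).support ∧ b.1 ≠ a.1
    · obtain ⟨c₀, hc₀supp, hc₀Pc⟩ :=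
        T.exists_child (T.pathToRoot a.1) (T.pathToRoot_isPath a.1) rfl hQ.1 hQ.2
      rw [Finset.sum_filter]
      have hkey : ∀ c ∈ Finset.univ,
          (if T.graph.Adj b.1 c then
            (if s(b.1, c) ∈ T.pathEdges c ∧ s(b.1, c) ∈ T.pathEdges a.1 then (1:ℝ) else 0)
           else 0)
          = if c = c₀ then (1:ℝ) else 0 := by
        intro c _
        by_cases hcc : c = c₀
        · subst hcc
          rw [if_pos rfl, if_pos (Pc.adj T hc₀Pc).symm]
          refine if_pos ⟨?_, ?_⟩
          · rw [Sym2.eq_swap]; exact hc₀Pc.mem_pathEdges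
          · rw [Sym2.eq_swap]; exact T.pathEdges_subset hc₀supp hc₀Pc.mem_pathEdges
        · rw [if_neg hcc]
          by_cases hadj : T.graph.Adj b.1 c
          · rw [if_pos hadj]
            refine if_neg ?_
            rintro ⟨hsc, hsa⟩
            have hPcc : T.Pc c b.1 := T.Pc_of_mem_pathEdges (by rwa [Sym2.eq_swap] at hsc)
            have hsa' := hsa
            rw [pathEdges, List.mem_toFinset] at hsa'
            have hcsupp : c ∈ (T.pathToRoot a.1).support :=
              SimpleGraph.Walk.snd_mem_support_of_mem_edges _ hsa'
            have hlc := hPcc.length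
            have hlc₀ := hc₀Pc.length
            rcases T.tri (T.pathToRoot a.1) (T.pathToRoot_isPath a.1) rfl hcsupp hc₀supp
              with h1 | h2
            · obtain ⟨hadj', e'⟩ := hPcc
              rw [e', SimpleGraph.Walk.support_cons] at h1
              rcases List.mem_cons.mp h1 with he | h1
              · exact hcc he.symm
              · have := (T.subsets_of_mem_support h1).2.2
                omega
            · obtain ⟨hadj', e'⟩ := hc₀Pc
              rw [e', SimpleGraph.Walk.support_cons] at h2
              rcases List.mem_cons.mp h2 with he | h2
              · exact hcc he
              · have := (T.subsets_of_mem_support h2).2.2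
                omega
          · rw [if_neg hadj]
      rw [Finset.sum_congr rfl hkey, Finset.sum_ite_eq' Finset.univ c₀,
        if_pos (Finset.mem_univ c₀), if_pos hQ]
    · rw [if_neg hQ]
      apply Finset.sum_eq_zero
      intro c hc
      refine if_neg ?_
      rintro ⟨hsc, hsa⟩
      have hPcc : T.Pc c b.1 := T.Pc_of_mem_pathEdges (by rwa [Sym2.eq_swap] at hsc)
      have hsa' := hsa
      rw [pathEdges, List.mem_toFinset] at hsa'
      have hbsupp : b.1 ∈ (T.pathToRoot a.1).support :=
        SimpleGraph.Walk.fst_mem_support_of_mem_edges _ hsa'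
      have hcsupp : c ∈ (T.pathToRoot a.1).support :=
        SimpleGraph.Walk.snd_mem_support_of_mem_edges _ hsa'
      refine hQ ⟨hbsupp, ?_⟩
      intro heq
      have h1 := (T.subsets_of_mem_support hcsupp).2.2
      have h2 := hPcc.length
      rw [heq] at h2
      omega
  rw [hS1, hS2]
  by_cases hab : a = b
  · subst hab
    rw [if_pos rfl, if_pos (SimpleGraph.Walk.start_mem_support _),
      if_neg (fun hh => hh.2 rfl)]
    norm_num
  · rw [if_neg hab]
    have hba : b.1 ≠ a.1 := fun hh => hab (Subtype.ext hh.symm)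
    by_cases hsupp : b.1 ∈ (T.pathToRoot a.1).support
    · rw [if_pos hsupp, if_pos ⟨hsupp, hba⟩]; norm_num
    · rw [if_neg hsupp, if_neg (fun hh => hsupp hh.1)]; norm_num

/-- `K_r H_g + K_x H_β = 1`. -/
lemma inv_left (r x g β : Sym2 V → ℝ)
    (hrx : ∀ e ∈ T.graph.edgeSet, 0 < (r e) ^ 2 + (x e) ^ 2)
    (hg : ∀ e, g e = r e / ((r e) ^ 2 + (x e) ^ 2))
    (hβ : ∀ e, β e = x e / ((r e) ^ 2 + (x e) ^ 2)) :
    T.pathMatrix r * T.lap g + T.pathMatrix x * T.lap β = 1 := by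
  ext a b
  rw [Matrix.add_apply, T.mul_lap_apply r g a b, T.mul_lap_apply x β a b,
    ← Finset.sum_add_distrib, Matrix.one_apply, ← T.count_sum a b]
  apply Finset.sum_congr rfl
  intro c hc
  have hadj : T.graph.Adj b.1 c := (Finset.mem_filter.mp hc).2
  have hE : s(b.1, c) ∈ T.graph.edgeSet := T.graph.mem_edgeSet.mpr hadj
  have hd : (r s(b.1, c)) ^ 2 + (x s(b.1, c)) ^ 2 ≠ 0 := ne_of_gt (hrx _ hE)
  have h1 : r s(b.1, c) * g s(b.1, c) + x s(b.1, c) * β s(b.1, c) = 1 := by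
    rw [hg, hβ]
    field_simp
  set s1 := (if s(b.1, c) ∈ T.pathEdges b.1 then (1:ℝ) else -1) with hs1
  set s2 := (if s(b.1, c) ∈ T.pathEdges a.1 then (1:ℝ) else 0) with hs2
  linear_combination (s1 * s2) * h1

/-- `K_r H_β = K_x H_g`. -/
lemma swap_eq (r x g β : Sym2 V → ℝ)
    (hg : ∀ e, g e = r e / ((r e) ^ 2 + (x e) ^ 2))
    (hβ : ∀ e, β e = x e / ((r e) ^ 2 + (x e) ^ 2)) :
    T.pathMatrix r * T.lap β = T.pathMatrix x * T.lap g := by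
  ext a b
  rw [T.mul_lap_apply r β a b, T.mul_lap_apply x g a b]
  apply Finset.sum_congr rfl
  intro c _
  have h1 : r s(b.1, c) * β s(b.1, c) = x s(b.1, c) * g s(b.1, c) := by
    rw [hg, hβ]
    ring
  rw [h1]

end GridTree


/-- Inversion of the Linear Coupled power-flow equations on a tree:
if `p = H_g ε + H_β θ` and `q = H_β ε - H_g θ`, where `H_g, H_β` are the reduced
weighted Laplacians with weights `g_e = r_e/(r_e² + x_e²)` and `β_e = x_e/(r_e² + x_e²)`,
then `ε = K_r p + K_x q` and `θ = K_x p - K_r q`. -/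
theorem lcpf_inversion
    {V : Type*} [Fintype V] [DecidableEq V] (T : GridTree V)
    (r x g β : Sym2 V → ℝ)
    (hrx : ∀ e ∈ T.graph.edgeSet, 0 < (r e) ^ 2 + (x e) ^ 2)
    (hg : ∀ e, g e = r e / ((r e) ^ 2 + (x e) ^ 2))
    (hβ : ∀ e, β e = x e / ((r e) ^ 2 + (x e) ^ 2))
    (p q ε θ : {v : V // v ≠ T.root} → ℝ)
    (hp : p = T.lap g *ᵥ ε + T.lap β *ᵥ θ)
    (hq : q = T.lap β *ᵥ ε - T.lap g *ᵥ θ) :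
    ε = T.pathMatrix r *ᵥ p + T.pathMatrix x *ᵥ q ∧
    θ = T.pathMatrix x *ᵥ p - T.pathMatrix r *ᵥ q := by
  have M1 := T.inv_left r x g β hrx hg hβ
  have M2 := T.swap_eq r x g β hg hβ
  constructor
  · rw [hp, hq, Matrix.mulVec_add, Matrix.mulVec_sub, Matrix.mulVec_mulVec,
      Matrix.mulVec_mulVec, Matrix.mulVec_mulVec, Matrix.mulVec_mulVec, M2]
    have hsum : (T.pathMatrix r * T.lap g) *ᵥ ε + (T.pathMatrix x * T.lap β) *ᵥ ε = ε := by
      rw [← Matrix.add_mulVec, M1, Matrix.one_mulVec]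
    conv_lhs => rw [← hsum]
    abel
  · rw [hp, hq, Matrix.mulVec_add, Matrix.mulVec_sub, Matrix.mulVec_mulVec,
      Matrix.mulVec_mulVec, Matrix.mulVec_mulVec, Matrix.mulVec_mulVec, M2]
    have hsum : (T.pathMatrix r * T.lap g) *ᵥ θ + (T.pathMatrix x * T.lap β) *ᵥ θ = θ := by
      rw [← Matrix.add_mulVec, M1, Matrix.one_mulVec]
    conv_lhs => rw [← hsum]
    abel
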